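/- For any A, B ∈ Mₙ(ℂ) there exists a partial isometry V ∈ Mₙ(ℂ) such that |A+B| ≤ (|A| + |B| + V*(|A*| + |B*|)V)/2. -/

import Mathlib

open scoped Matrix ComplexOrder

/-- `A^p` for a matrix, via continuous functional calculus with the real power function. -/
noncomputable def mpow {n : ℕ} (A : Matrix (Fin n) (Fin n) ℂ) (p : ℝ) : Matrix (Fin n) (Fin n) ℂ :=
  cfc (fun x : ℝ => x ^ p) A

/-- Matrix absolute value `|X| = (XᴴX)^{1/2}`. -/
noncomputable def matAbs {n : ℕ} (X : Matrix (Fin n) (Fin n) ℂ) : Matrix (Fin n) (Fin n) ℂ :=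
  cfc Real.sqrt (Xᴴ * X)

/-- Loewner order: `X ≤ Y` iff `Y - X` is positive semidefinite. -/
def loewnerLE {n : ℕ} (X Y : Matrix (Fin n) (Fin n) ℂ) : Prop := (Y - X).PosSemidef

namespace TriAux

open Matrix

variable {n : ℕ} {A : Matrix (Fin n) (Fin n) ℂ}

lemma cfc_mul' (hA : A.IsHermitian) (f g : ℝ → ℝ) :
    hA.cfc f * hA.cfc g = hA.cfc fun x => f x * g x := by
  have hU : (star (hA.eigenvectorUnitary : Matrix (Fin n) (Fin n) ℂ)) *
      (hA.eigenvectorUnitary : Matrix (Fin n) (Fin n) ℂ) = 1 :=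
    Unitary.coe_star_mul_self hA.eigenvectorUnitary
  simp only [Matrix.IsHermitian.cfc, Unitary.conjStarAlgAut_apply]
  set U : Matrix (Fin n) (Fin n) ℂ := ↑hA.eigenvectorUnitary
  set d₁ : Fin n → ℂ := RCLike.ofReal ∘ f ∘ hA.eigenvalues
  set d₂ : Fin n → ℂ := RCLike.ofReal ∘ g ∘ hA.eigenvalues
  have hd : (RCLike.ofReal ∘ (fun x => f x * g x) ∘ hA.eigenvalues : Fin n → ℂ) = d₁ * d₂ := by
    funext i
    simp [d₁, d₂, Function.comp]
  rw [hd, show diagonal (d₁ * d₂) = diagonal d₁ * diagonal d₂ from (diagonal_mul_diagonal _ _).symm]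
  calc U * diagonal d₁ * star U * (U * diagonal d₂ * star U)
      = U * diagonal d₁ * (star U * U) * (diagonal d₂ * star U) := by
        simp only [mul_assoc]
    _ = U * (diagonal d₁ * diagonal d₂) * star U := by
        rw [hU, mul_one]; simp only [mul_assoc]

lemma cfc_conjT (hA : A.IsHermitian) (f : ℝ → ℝ) : (hA.cfc f)ᴴ = hA.cfc f := by
  have hd : star (RCLike.ofReal ∘ f ∘ hA.eigenvalues : Fin n → ℂ)
      = RCLike.ofReal ∘ f ∘ hA.eigenvalues := by
    funext i; simp [Function.comp]
  have hD : star (diagonal (RCLike.ofReal ∘ f ∘ hA.eigenvalues) : Matrix (Fin n) (Fin n) ℂ)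
      = diagonal (RCLike.ofReal ∘ f ∘ hA.eigenvalues) := by
    rw [Matrix.star_eq_conjTranspose, diagonal_conjTranspose, hd]
  rw [← Matrix.star_eq_conjTranspose, Matrix.IsHermitian.cfc, Unitary.conjStarAlgAut_apply, StarMul.star_mul,
    StarMul.star_mul, star_star, hD, mul_assoc]

lemma cfc_psd (hA : A.IsHermitian) {f : ℝ → ℝ} (hf : ∀ x, 0 ≤ f x) :
    (hA.cfc f).PosSemidef := by
  rw [Matrix.IsHermitian.cfc, Unitary.conjStarAlgAut_apply, Matrix.star_eq_conjTranspose]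
  refine PosSemidef.mul_mul_conjTranspose_same (posSemidef_diagonal_iff.mpr fun i => ?_) _
  exact RCLike.ofReal_nonneg.mpr (hf _)

lemma cfc_congr' (hA : A.IsHermitian) {f g : ℝ → ℝ}
    (h : ∀ i, f (hA.eigenvalues i) = g (hA.eigenvalues i)) : hA.cfc f = hA.cfc g := by
  have hd : (RCLike.ofReal ∘ f ∘ hA.eigenvalues : Fin n → ℂ)
      = RCLike.ofReal ∘ g ∘ hA.eigenvalues := by
    funext i; simp [Function.comp, h i]
  rw [Matrix.IsHermitian.cfc, Matrix.IsHermitian.cfc, hd]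

lemma cfc_id' (hA : A.IsHermitian) : hA.cfc (fun x => x) = A := by
  rw [Matrix.IsHermitian.cfc]
  exact hA.spectral_theorem.symm

lemma matAbs_eq (X : Matrix (Fin n) (Fin n) ℂ) :
    matAbs X = (posSemidef_conjTranspose_mul_self X).1.cfc Real.sqrt :=
  (posSemidef_conjTranspose_mul_self X).1.cfc_eq Real.sqrt

lemma matAbs_psd (X : Matrix (Fin n) (Fin n) ℂ) : (matAbs X).PosSemidef := by
  rw [matAbs_eq]; exact cfc_psd _ fun x => Real.sqrt_nonneg x

lemma matAbs_sq (X : Matrix (Fin n) (Fin n) ℂ) : matAbs X * matAbs X = Xᴴ * X := by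
  rw [matAbs_eq]
  simp only [cfc_mul']
  rw [cfc_congr' (g := fun x => x) _ fun i => Real.mul_self_sqrt
    ((posSemidef_conjTranspose_mul_self X).eigenvalues_nonneg i), cfc_id']

lemma polar (X : Matrix (Fin n) (Fin n) ℂ) :
    ∃ W : Matrix (Fin n) (Fin n) ℂ,
      W * matAbs X = X ∧ Wᴴ * W * matAbs X = matAbs X ∧ W * Wᴴ * W = W := by
  have hP : (matAbs X).PosSemidef := matAbs_psd X
  set g : ℝ → ℝ := fun x => if x = 0 then 0 else x⁻¹ with hg
  set h : ℝ → ℝ := fun x => if x = 0 then 0 else 1 with hh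
  have hPid : matAbs X = hP.1.cfc (fun x => x) := (cfc_id' hP.1).symm
  have hGH : (hP.1.cfc g)ᴴ = hP.1.cfc g := cfc_conjT _ _
  have hQH : (hP.1.cfc h)ᴴ = hP.1.cfc h := cfc_conjT _ _
  have hGP : hP.1.cfc g * matAbs X = hP.1.cfc h := by
    rw [show hP.1.cfc g * matAbs X = hP.1.cfc g * hP.1.cfc (fun x => x) from
      congrArg (hP.1.cfc g * ·) hPid, cfc_mul']
    exact cfc_congr' _ fun i => by by_cases hx : (hP.1.eigenvalues i) = 0 <;>
      simp [g, h, hx, inv_mul_cancel₀]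
  have hPQ : matAbs X * hP.1.cfc h = matAbs X := by
    rw [show matAbs X * hP.1.cfc h = hP.1.cfc (fun x => x) * hP.1.cfc h from
      congrArg (· * hP.1.cfc h) hPid, cfc_mul',
      cfc_congr' (g := fun x => x) _ fun i => by
        by_cases hx : (hP.1.eigenvalues i) = 0 <;> simp [h, hx]]
    exact cfc_id' hP.1
  have hQP : hP.1.cfc h * matAbs X = matAbs X := by
    have := congrArg conjTranspose hPQ
    rwa [conjTranspose_mul, hQH, hP.1.eq] at this
  have hXXP : Xᴴ * X = matAbs X * matAbs X := (matAbs_sq X).symm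
  have e1 : Xᴴ * (X * hP.1.cfc h) = Xᴴ * X := by
    rw [← mul_assoc, hXXP, mul_assoc, hPQ, ← hXXP]
  have e2 : (hP.1.cfc h)ᴴ * Xᴴ * X = Xᴴ * X := by
    rw [hQH, mul_assoc, hXXP, ← mul_assoc, hQP, ← hXXP]
  have e3 : (hP.1.cfc h)ᴴ * Xᴴ * (X * hP.1.cfc h) = Xᴴ * X := by
    rw [← mul_assoc, e2, mul_assoc, e1]
  have hXQ : X * hP.1.cfc h = X := by
    have hz : (X - X * hP.1.cfc h)ᴴ * (X - X * hP.1.cfc h) = 0 := by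
      rw [conjTranspose_sub, sub_mul, mul_sub, mul_sub, conjTranspose_mul, e1, e2, e3]
      simp
    have := conjTranspose_mul_self_eq_zero.mp hz
    rw [sub_eq_zero] at this
    exact this.symm
  have hWW : (X * hP.1.cfc g)ᴴ * (X * hP.1.cfc g) = hP.1.cfc h := by
    have m1 : matAbs X * matAbs X = hP.1.cfc (fun x => x * x) := by
      rw [show matAbs X * matAbs X = hP.1.cfc (fun x => x) * hP.1.cfc (fun x => x) from
        congrArg₂ (· * ·) hPid hPid, cfc_mul']
    rw [conjTranspose_mul, hGH, mul_assoc, ← mul_assoc Xᴴ, hXXP, m1]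
    simp only [cfc_mul']
    exact cfc_congr' _ fun i => by
      by_cases hx : (hP.1.eigenvalues i) = 0 <;> simp [g, h, hx]
  refine ⟨X * hP.1.cfc g, ?_, ?_, ?_⟩
  · rw [mul_assoc, hGP, hXQ]
  · rw [hWW, hQP]
  · rw [mul_assoc, hWW, mul_assoc, cfc_mul']
    refine congrArg (X * ·) ?_
    exact cfc_congr' _ fun i => by by_cases hx : (hP.1.eigenvalues i) = 0 <;> simp [g, h, hx]

lemma cfc_sqrt_mul_self {M : Matrix (Fin n) (Fin n) ℂ} (hP : M.PosSemidef) :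
    hP.1.cfc Real.sqrt * hP.1.cfc Real.sqrt = M := by
  simp only [cfc_mul']
  rw [cfc_congr' (g := fun x => x) _ fun i => Real.mul_self_sqrt (hP.eigenvalues_nonneg i), cfc_id']

lemma key (A V : Matrix (Fin n) (Fin n) ℂ) :
    (matAbs A + Vᴴ * matAbs Aᴴ * V - Vᴴ * A - Aᴴ * V).PosSemidef := by
  obtain ⟨W, hW1, hW2, hW3⟩ := polar A
  have hR : (matAbs A).PosSemidef := matAbs_psd A
  have hS : (matAbs Aᴴ).PosSemidef := matAbs_psd Aᴴ
  have hRW : matAbs A * (Wᴴ * W) = matAbs A := by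
    have := congrArg conjTranspose hW2
    rwa [conjTranspose_mul, conjTranspose_mul, conjTranspose_conjTranspose, hR.1.eq] at this
  have hAH : matAbs A * Wᴴ = Aᴴ := by
    have := congrArg conjTranspose hW1
    rwa [conjTranspose_mul, hR.1.eq] at this
  have hpsd : (W * matAbs A * Wᴴ).PosSemidef := by
    have e : W * matAbs A * Wᴴ = (W * hR.1.cfc Real.sqrt) * (W * hR.1.cfc Real.sqrt)ᴴ := by
      rw [conjTranspose_mul, cfc_conjT _ _]
      simp only [mul_assoc]
      rw [← mul_assoc (hR.1.cfc Real.sqrt), cfc_sqrt_mul_self hR]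
    exact e ▸ posSemidef_self_mul_conjTranspose _
  have hsq : (W * matAbs A * Wᴴ) ^ 2 = (matAbs Aᴴ) ^ 2 := by
    have hs2 : matAbs Aᴴ * matAbs Aᴴ = A * Aᴴ := by
      rw [matAbs_sq Aᴴ, conjTranspose_conjTranspose]
    rw [pow_two, pow_two, hs2]
    calc (W * matAbs A * Wᴴ) * (W * matAbs A * Wᴴ)
        = W * matAbs A * (Wᴴ * W * matAbs A) * Wᴴ := by simp only [mul_assoc]
      _ = W * matAbs A * matAbs A * Wᴴ := by rw [hW2]
      _ = (W * matAbs A) * (matAbs A * Wᴴ) := by simp only [mul_assoc]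
      _ = A * Aᴴ := by rw [hW1, hAH]
  have hS0 : W * matAbs A * Wᴴ = matAbs Aᴴ := by
    open scoped MatrixOrder in exact (CFC.sq_eq_sq_iff _ _ hpsd.nonneg hS.nonneg).mp hsq
  have hSW : matAbs Aᴴ * W = A := by
    rw [← hS0]
    calc W * matAbs A * Wᴴ * W = W * (matAbs A * (Wᴴ * W)) := by simp only [mul_assoc]
      _ = W * matAbs A := by rw [hRW]
      _ = A := hW1
  have hWS : Wᴴ * matAbs Aᴴ = Aᴴ := by
    have := congrArg conjTranspose hSW
    rwa [conjTranspose_mul, hS.1.eq] at this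
  have hWSW : Wᴴ * matAbs Aᴴ * W = matAbs A := by
    calc Wᴴ * matAbs Aᴴ * W = Wᴴ * (matAbs Aᴴ * W) := mul_assoc _ _ _
      _ = Wᴴ * (W * matAbs A) := by conv_lhs => rw [hSW, ← hW1]
      _ = Wᴴ * W * matAbs A := (mul_assoc _ _ _).symm
      _ = matAbs A := hW2
  have hS'H : (hS.1.cfc Real.sqrt)ᴴ = (hS.1.cfc Real.sqrt) := cfc_conjT _ _
  have hS'S' : (hS.1.cfc Real.sqrt) * (hS.1.cfc Real.sqrt) = matAbs Aᴴ := cfc_sqrt_mul_self hS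
  have main : matAbs A + Vᴴ * matAbs Aᴴ * V - Vᴴ * A - Aᴴ * V
      = ((hS.1.cfc Real.sqrt) * V - (hS.1.cfc Real.sqrt) * W)ᴴ * ((hS.1.cfc Real.sqrt) * V - (hS.1.cfc Real.sqrt) * W) := by
    rw [conjTranspose_sub, sub_mul, mul_sub, mul_sub, conjTranspose_mul, conjTranspose_mul,
      hS'H]
    have t1 : Vᴴ * (hS.1.cfc Real.sqrt) * ((hS.1.cfc Real.sqrt) * V) = Vᴴ * matAbs Aᴴ * V := by
      calc Vᴴ * (hS.1.cfc Real.sqrt) * ((hS.1.cfc Real.sqrt) * V) = Vᴴ * ((hS.1.cfc Real.sqrt) * (hS.1.cfc Real.sqrt)) * V := by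
            simp only [mul_assoc]
        _ = Vᴴ * matAbs Aᴴ * V := by rw [hS'S']
    have t2 : Vᴴ * (hS.1.cfc Real.sqrt) * ((hS.1.cfc Real.sqrt) * W) = Vᴴ * A := by
      calc Vᴴ * (hS.1.cfc Real.sqrt) * ((hS.1.cfc Real.sqrt) * W) = Vᴴ * ((hS.1.cfc Real.sqrt) * (hS.1.cfc Real.sqrt) * W) := by
            simp only [mul_assoc]
        _ = Vᴴ * A := by rw [hS'S', hSW]
    have t3 : Wᴴ * (hS.1.cfc Real.sqrt) * ((hS.1.cfc Real.sqrt) * V) = Aᴴ * V := by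
      calc Wᴴ * (hS.1.cfc Real.sqrt) * ((hS.1.cfc Real.sqrt) * V) = Wᴴ * ((hS.1.cfc Real.sqrt) * (hS.1.cfc Real.sqrt)) * V := by
            simp only [mul_assoc]
        _ = Aᴴ * V := by rw [hS'S', hWS]
    have t4 : Wᴴ * (hS.1.cfc Real.sqrt) * ((hS.1.cfc Real.sqrt) * W) = matAbs A := by
      calc Wᴴ * (hS.1.cfc Real.sqrt) * ((hS.1.cfc Real.sqrt) * W) = Wᴴ * ((hS.1.cfc Real.sqrt) * (hS.1.cfc Real.sqrt)) * W := by
            simp only [mul_assoc]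
        _ = matAbs A := by rw [hS'S']; exact hWSW
    rw [t1, t2, t3, t4]
    abel
  rw [main]
  exact posSemidef_conjTranspose_mul_self _

lemma half_psd {M : Matrix (Fin n) (Fin n) ℂ} (hM : M.PosSemidef) :
    ((2 : ℂ)⁻¹ • M).PosSemidef := by
  have h2 : (0:ℂ) ≤ (2:ℂ)⁻¹ := by
    rw [show ((2:ℂ)⁻¹ : ℂ) = ((2⁻¹ : ℝ) : ℂ) by norm_num]
    exact_mod_cast Complex.zero_le_real.mpr (by norm_num)
  refine posSemidef_iff_dotProduct_mulVec.mpr ⟨?_, ?_⟩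
  · have hstar : star ((2:ℂ)⁻¹) = (2:ℂ)⁻¹ := by
      simp
    show ((2 : ℂ)⁻¹ • M)ᴴ = (2 : ℂ)⁻¹ • M
    rw [conjTranspose_smul, hstar, hM.1.eq]
  · intro x
    rw [smul_mulVec, dotProduct_smul, smul_eq_mul]
    exact mul_nonneg h2 (hM.dotProduct_mulVec_nonneg x)

end TriAux

open Matrix in
/-- Triangle-type inequality: for any `A, B` there is a partial isometry `V` with
`|A + B| ≤ (|A| + |B| + V* (|A*| + |B*|) V)/2`. -/
theorem triangle_type_inequality {n : ℕ} (A B : Matrix (Fin n) (Fin n) ℂ) :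
    ∃ V : Matrix (Fin n) (Fin n) ℂ, V * Vᴴ * V = V ∧
      loewnerLE (matAbs (A + B))
        ((2 : ℂ)⁻¹ • (matAbs A + matAbs B + Vᴴ * (matAbs Aᴴ + matAbs Bᴴ) * V)) := by
  obtain ⟨V, hV1, hV2, hV3⟩ := TriAux.polar (A + B)
  refine ⟨V, hV3, ?_⟩
  have hVT : Vᴴ * (A + B) = matAbs (A + B) := by
    conv_lhs => rw [← hV1]
    rw [← mul_assoc, hV2]
  have hTV : (A + B)ᴴ * V = matAbs (A + B) := by
    have := congrArg conjTranspose hVT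
    rwa [conjTranspose_mul, conjTranspose_conjTranspose, (TriAux.matAbs_psd (A + B)).1.eq]
      at this
  have hMA := TriAux.key A V
  have hMB := TriAux.key B V
  have hsum := hMA.add hMB
  unfold loewnerLE
  have heq : (2 : ℂ)⁻¹ • (matAbs A + matAbs B + Vᴴ * (matAbs Aᴴ + matAbs Bᴴ) * V)
      - matAbs (A + B)
      = (2 : ℂ)⁻¹ • ((matAbs A + Vᴴ * matAbs Aᴴ * V - Vᴴ * A - Aᴴ * V)
        + (matAbs B + Vᴴ * matAbs Bᴴ * V - Vᴴ * B - Bᴴ * V)) := by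
    have e1 : Vᴴ * A + Vᴴ * B = matAbs (A + B) := by rw [← mul_add, hVT]
    have e2 : Aᴴ * V + Bᴴ * V = matAbs (A + B) := by
      rw [← add_mul, ← conjTranspose_add, hTV]
    have e3 : Vᴴ * (matAbs Aᴴ + matAbs Bᴴ) * V
        = Vᴴ * matAbs Aᴴ * V + Vᴴ * matAbs Bᴴ * V := by rw [mul_add, add_mul]
    rw [e3]
    have e4 : (matAbs A + Vᴴ * matAbs Aᴴ * V - Vᴴ * A - Aᴴ * V)
        + (matAbs B + Vᴴ * matAbs Bᴴ * V - Vᴴ * B - Bᴴ * V)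
        = (matAbs A + matAbs B + (Vᴴ * matAbs Aᴴ * V + Vᴴ * matAbs Bᴴ * V))
          - matAbs (A + B) - matAbs (A + B) := by
      nth_rw 2 [← e2]; rw [← e1]; abel
    rw [e4, smul_sub, smul_sub]
    have e5 : (2 : ℂ)⁻¹ • matAbs (A + B) + (2 : ℂ)⁻¹ • matAbs (A + B) = matAbs (A + B) := by
      rw [← two_smul ℂ, smul_smul]
      norm_num
    rw [sub_sub, e5]
  rw [heq]
  exact TriAux.half_psd hsum
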